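/- Let m ≥ 1 and r > 0. Then for every f ∈ L²(ℝ^m): ∫_{ℝ^m} |Λ_r f(x) − f(x)|² dx ≤ ((m+2)/(2 ν_m r^m)) ∬_{|x−y|<r} |f(x) − f(y)|² dx dy. -/

import Mathlib

open MeasureTheory

/-- The Lebesgue volume of the unit ball in `ℝ^m`. -/
noncomputable def unitBallVol (m : ℕ) : ℝ :=
  (volume (Metric.ball (0 : EuclideanSpace ℝ (Fin m)) 1)).toReal

/-- The profile `ψ(t) = ((m+2)/(2ν_m))(1 − t²)` for `0 ≤ t ≤ 1`, and `0` for `t > 1`. -/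
noncomputable def smoothPsi (m : ℕ) (t : ℝ) : ℝ :=
  if t ≤ 1 then (((m : ℝ) + 2) / (2 * unitBallVol m)) * (1 - t ^ 2) else 0

/-- The smoothing kernel `k_r(x,y) = r^{−m} ψ(|x−y|/r)`. -/
noncomputable def smoothKernel (m : ℕ) (r : ℝ) (x y : EuclideanSpace ℝ (Fin m)) : ℝ :=
  (r ^ m)⁻¹ * smoothPsi m (dist x y / r)

/-- The smoothing operator `Λ_r f(x) = ∫ k_r(x,y) f(y) dy`. -/
noncomputable def smoothOp (m : ℕ) (r : ℝ) (f : EuclideanSpace ℝ (Fin m) → ℝ)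
    (x : EuclideanSpace ℝ (Fin m)) : ℝ :=
  ∫ y, smoothKernel m r x y * f y

section Aux
open Metric Set

variable {m : ℕ}

local notation "E" => EuclideanSpace ℝ (Fin m)

lemma nontrivial_E (hm : 1 ≤ m) : Nontrivial (EuclideanSpace ℝ (Fin m)) := by
  refine ⟨0, EuclideanSpace.single ⟨0, hm⟩ 1, fun h => ?_⟩
  have := congrArg (fun v : EuclideanSpace ℝ (Fin m) => v ⟨0, hm⟩) h.symm
  simp [EuclideanSpace.single] at this

lemma nu_pos (hm : 1 ≤ m) : 0 < unitBallVol m := by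
  haveI := nontrivial_E hm
  rw [unitBallVol]
  exact ENNReal.toReal_pos (measure_ball_pos volume 0 one_pos).ne' measure_ball_lt_top.ne

lemma nu_nonneg : 0 ≤ unitBallVol m := ENNReal.toReal_nonneg

lemma psi_nonneg {t : ℝ} (ht : 0 ≤ t) : 0 ≤ smoothPsi m t := by
  rw [smoothPsi]
  split_ifs with h
  · apply mul_nonneg (div_nonneg (by positivity) (by nlinarith [nu_nonneg (m := m)]))
    nlinarith
  · exact le_refl 0

lemma psi_le {t : ℝ} (ht : 0 ≤ t) :
    smoothPsi m t ≤ ((m : ℝ) + 2) / (2 * unitBallVol m) := by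
  have hC : 0 ≤ ((m : ℝ) + 2) / (2 * unitBallVol m) :=
    div_nonneg (by positivity) (by nlinarith [nu_nonneg (m := m)])
  rw [smoothPsi]
  split_ifs with h
  · nlinarith
  · exact hC

lemma psi_eq_zero {t : ℝ} (ht : 1 ≤ t) : smoothPsi m t = 0 := by
  rw [smoothPsi]
  split_ifs with h
  · have : t = 1 := le_antisymm h ht
    simp [this]
  · rfl

lemma measurable_psi : Measurable (smoothPsi m) := by
  apply Measurable.ite (measurableSet_le measurable_id measurable_const)
  · exact (measurable_const.mul ((measurable_const.sub (measurable_id.pow_const 2))))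
  · exact measurable_const

variable {r : ℝ}

lemma kernel_nonneg (hr : 0 < r) (x y : EuclideanSpace ℝ (Fin m)) :
    0 ≤ smoothKernel m r x y :=
  mul_nonneg (by positivity) (psi_nonneg (by positivity))

lemma kernel_le (hr : 0 < r) (x y : EuclideanSpace ℝ (Fin m)) :
    smoothKernel m r x y ≤ (r ^ m)⁻¹ * (((m : ℝ) + 2) / (2 * unitBallVol m)) := by
  exact mul_le_mul_of_nonneg_left (psi_le (by positivity)) (by positivity)

lemma kernel_eq_zero (hr : 0 < r) {x y : EuclideanSpace ℝ (Fin m)} (h : r ≤ dist x y) :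
    smoothKernel m r x y = 0 := by
  rw [smoothKernel, psi_eq_zero ((one_le_div hr).mpr h), mul_zero]

lemma kernel_measurable (hr : 0 < r) (x : EuclideanSpace ℝ (Fin m)) :
    Measurable (fun y => smoothKernel m r x y) :=
  measurable_const.mul (measurable_psi.comp ((measurable_const.dist measurable_id).div_const r))

lemma kernel_integrable (hr : 0 < r) (x : EuclideanSpace ℝ (Fin m)) :
    Integrable (fun y => smoothKernel m r x y) := by
  set C := (r ^ m)⁻¹ * (((m : ℝ) + 2) / (2 * unitBallVol m)) with hC
  have hCnn : 0 ≤ C := by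
    apply mul_nonneg (by positivity)
    exact div_nonneg (by positivity) (by nlinarith [nu_nonneg (m := m)])
  refine Integrable.mono'
    (g := (Metric.closedBall x r).indicator fun _ => C)
    ((integrableOn_const measure_closedBall_lt_top.ne).integrable_indicator
      measurableSet_closedBall) ((kernel_measurable hr x).aestronglyMeasurable)
    (Filter.Eventually.of_forall fun y => ?_)
  rw [Real.norm_of_nonneg (kernel_nonneg hr x y)]
  by_cases hy : y ∈ Metric.closedBall x r
  · rw [Set.indicator_of_mem hy]
    exact kernel_le hr x y
  · rw [Set.indicator_of_notMem hy]
    rw [kernel_eq_zero hr]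
    rw [Metric.mem_closedBall, dist_comm] at hy
    linarith [not_le.mp hy]

lemma kernel_integral_one (hm : 1 ≤ m) (hr : 0 < r) (x : EuclideanSpace ℝ (Fin m)) :
    ∫ y, smoothKernel m r x y = 1 := by
  haveI := nontrivial_E hm
  set C := ((m : ℝ) + 2) / (2 * unitBallVol m) with hCdef
  have h1 : (fun y : EuclideanSpace ℝ (Fin m) => smoothKernel m r x y)
      = fun y => (fun z : EuclideanSpace ℝ (Fin m) =>
          (r ^ m)⁻¹ * smoothPsi m (‖z‖ / r)) (y - x) := by
    funext y
    simp only [smoothKernel]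
    rw [dist_eq_norm, norm_sub_rev]
  rw [h1, integral_sub_right_eq_self (fun z : EuclideanSpace ℝ (Fin m) =>
    (r ^ m)⁻¹ * smoothPsi m (‖z‖ / r)) x]
  rw [MeasureTheory.integral_fun_norm_addHaar volume
    (fun t => (r ^ m)⁻¹ * smoothPsi m (t / r))]
  have hdim : Module.finrank ℝ (EuclideanSpace ℝ (Fin m)) = m := by
    simp [finrank_euclideanSpace_fin]
  rw [hdim]
  have hC0 : 0 < unitBallVol m := nu_pos hm
  have hrm : (r : ℝ) ^ m ≠ 0 := by positivity
  -- rewrite the inner integrand on `Ioi 0`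
  have hIoi : (Set.Ioi (0:ℝ)) = Set.Ioc 0 r ∪ Set.Ioi r := (Set.Ioc_union_Ioi_eq_Ioi hr.le).symm
  set g : ℝ → ℝ := fun y => y ^ (m - 1) • ((r ^ m)⁻¹ * smoothPsi m (y / r)) with hg
  have hg_zero : ∀ y ∈ Set.Ioi r, g y = 0 := by
    intro y hy
    have : (1:ℝ) ≤ y / r := (one_le_div hr).mpr (le_of_lt hy)
    simp [hg, psi_eq_zero this]
  set P : ℝ → ℝ := fun y => (r ^ m)⁻¹ * (((m : ℝ) + 2) / (2 * unitBallVol m)) *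
      (y ^ (m - 1) - y ^ (m + 1) / r ^ 2) with hP
  have hgP : ∀ y ∈ Set.Ioc (0:ℝ) r, g y = P y := by
    intro y hy
    have h1 : y / r ≤ 1 := (div_le_one hr).mpr hy.2
    have h2 : y ^ (m + 1) = y ^ (m - 1) * y ^ 2 := by
      rw [← pow_add]; congr 1; omega
    simp only [hg, hP, smoothPsi, if_pos h1, smul_eq_mul, h2]
    field_simp
  have hPcont : Continuous P := by
    apply Continuous.mul continuous_const
    exact (continuous_pow _).sub ((continuous_pow _).div_const _)
  have hint1 : IntegrableOn g (Set.Ioc 0 r) volume := by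
    rw [integrableOn_congr_fun hgP measurableSet_Ioc]
    exact hPcont.integrableOn_Ioc
  have hint2 : IntegrableOn g (Set.Ioi r) volume := by
    rw [integrableOn_congr_fun hg_zero measurableSet_Ioi]
    exact integrableOn_zero
  rw [hIoi, setIntegral_union (Set.Ioc_disjoint_Ioi le_rfl) measurableSet_Ioi hint1 hint2]
  rw [setIntegral_congr_fun measurableSet_Ioi hg_zero, integral_zero, add_zero]
  rw [setIntegral_congr_fun measurableSet_Ioc hgP]
  rw [← intervalIntegral.integral_of_le hr.le]
  have hsub : IntervalIntegrable (fun y : ℝ => y ^ (m - 1)) volume 0 r :=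
    intervalIntegral.intervalIntegrable_pow _
  have hsub2 : IntervalIntegrable (fun y : ℝ => y ^ (m + 1) / r ^ 2) volume 0 r :=
    (intervalIntegral.intervalIntegrable_pow _).div_const _
  rw [hP]
  simp only [intervalIntegral.integral_const_mul]
  rw [intervalIntegral.integral_sub hsub hsub2, intervalIntegral.integral_div,
    integral_pow, integral_pow]
  have hm1 : m - 1 + 1 = m := Nat.sub_add_cancel hm
  rw [hm1]
  have hmne : m ≠ 0 := by omega
  rw [zero_pow hmne, zero_pow (by omega : m + 1 + 1 ≠ 0)]
  have hcast : ((m - 1 : ℕ) : ℝ) + 1 = (m : ℝ) := by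
    rw [Nat.cast_sub hm]; ring
  rw [hcast]
  push_cast
  have hrm2 : r ^ (m + 1 + 1) = r ^ m * r ^ 2 := by rw [← pow_add]
  rw [nsmul_eq_mul]
  have hmR : (m : ℝ) ≠ 0 := Nat.cast_ne_zero.mpr hmne
  have hν : volume.real (Metric.ball (0 : EuclideanSpace ℝ (Fin m)) 1) = unitBallVol m := rfl
  rw [hν, hrm2, smul_eq_mul]
  field_simp
  ring

lemma pointwise_bound (hm : 1 ≤ m) (hr : 0 < r) (f : EuclideanSpace ℝ (Fin m) → ℝ)
    (hf : MemLp f 2 volume) (x : EuclideanSpace ℝ (Fin m)) :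
    (smoothOp m r f x - f x) ^ 2
      ≤ (r ^ m)⁻¹ * (((m : ℝ) + 2) / (2 * unitBallVol m)) *
          ∫ y in Metric.ball x r, (f x - f y) ^ 2 := by
  set C := (r ^ m)⁻¹ * (((m : ℝ) + 2) / (2 * unitBallVol m)) with hCdef
  have hCnn : 0 ≤ C :=
    mul_nonneg (by positivity) (div_nonneg (by positivity) (by nlinarith [nu_nonneg (m := m)]))
  set φ : EuclideanSpace ℝ (Fin m) → ℝ := fun y => smoothKernel m r x y with hφdef
  set g : EuclideanSpace ℝ (Fin m) → ℝ := fun y => f y - f x with hgdef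
  have hφnn : ∀ y, 0 ≤ φ y := fun y => kernel_nonneg hr x y
  have hφle : ∀ y, φ y ≤ C := fun y => kernel_le hr x y
  have hφzero : ∀ y, r ≤ dist x y → φ y = 0 := fun y hy => kernel_eq_zero hr hy
  have hφint : Integrable φ := kernel_integrable hr x
  have hφmeas : AEStronglyMeasurable φ volume := (kernel_measurable hr x).aestronglyMeasurable
  have hgmeas : AEStronglyMeasurable g volume := hf.1.sub aestronglyMeasurable_const
  have hg2meas : AEStronglyMeasurable (fun y => g y ^ 2) volume := hgmeas.mul hgmeas |>.congr
    (Filter.Eventually.of_forall fun y => (sq (g y)).symm)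
  haveI : Fact (volume (Metric.closedBall x r) < ⊤) := ⟨measure_closedBall_lt_top⟩
  have hg2 : IntegrableOn (fun y => g y ^ 2) (Metric.closedBall x r) volume := by
    have h1 : MemLp g 2 (volume.restrict (Metric.closedBall x r)) :=
      (hf.restrict _).sub (memLp_const (f x))
    exact h1.integrable_sq
  -- Integrability of φ * g²
  have hφg2 : Integrable (fun y => φ y * g y ^ 2) volume := by
    refine Integrable.mono'
      (g := (Metric.closedBall x r).indicator fun y => C * g y ^ 2)
      (IntegrableOn.integrable_indicator (hg2.const_mul C) measurableSet_closedBall)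
      (hφmeas.mul hg2meas) (Filter.Eventually.of_forall fun y => ?_)
    rw [Real.norm_of_nonneg (mul_nonneg (hφnn y) (sq_nonneg _))]
    by_cases hy : y ∈ Metric.closedBall x r
    · rw [Set.indicator_of_mem hy]
      exact mul_le_mul_of_nonneg_right (hφle y) (sq_nonneg _)
    · rw [Set.indicator_of_notMem hy]
      rw [Metric.mem_closedBall, dist_comm] at hy
      rw [hφzero y (not_le.mp hy).le, zero_mul]
  -- Integrability of φ * g
  have hφg : Integrable (fun y => φ y * g y) volume := by
    have hIOn : IntegrableOn (fun y => C * (1 + g y ^ 2)) (Metric.closedBall x r) volume :=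
      ((integrableOn_const measure_closedBall_lt_top.ne).add hg2).const_mul C
    refine Integrable.mono'
      (g := (Metric.closedBall x r).indicator fun y => C * (1 + g y ^ 2))
      (hIOn.integrable_indicator measurableSet_closedBall)
      (hφmeas.mul hgmeas) (Filter.Eventually.of_forall fun y => ?_)
    by_cases hy : y ∈ Metric.closedBall x r
    · rw [Set.indicator_of_mem hy, Real.norm_eq_abs, abs_mul, abs_of_nonneg (hφnn y)]
      have h1 : |g y| ≤ 1 + g y ^ 2 := by nlinarith [sq_nonneg (|g y| - 1), sq_abs (g y)]
      have := mul_le_mul (hφle y) h1 (abs_nonneg _) hCnn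
      linarith
    · rw [Set.indicator_of_notMem hy]
      rw [Metric.mem_closedBall, dist_comm] at hy
      rw [Real.norm_eq_abs, hφzero y (not_le.mp hy).le, zero_mul, abs_zero]
  -- the identity Λf x - f x = ∫ φ g
  have hid : smoothOp m r f x - f x = ∫ y, φ y * g y := by
    have h2 : ∀ y, φ y * g y = φ y * f y - φ y * f x := fun y => by
      simp only [hgdef]; ring
    simp only [h2]
    have hφf : Integrable (fun y => φ y * f y) volume := by
      have : (fun y => φ y * f y) = fun y => φ y * g y + φ y * f x := by
        funext y; simp only [hgdef]; ring
      rw [this]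
      exact hφg.add (hφint.mul_const (f x))
    rw [integral_sub hφf (hφint.mul_const (f x)), MeasureTheory.integral_mul_const,
      kernel_integral_one hm hr x, one_mul]
    rfl
  -- Cauchy-Schwarz
  set A := ∫ y, φ y * g y ^ 2 with hAdef
  have hAnn : 0 ≤ A :=
    integral_nonneg fun y => mul_nonneg (hφnn y) (sq_nonneg _)
  set F : EuclideanSpace ℝ (Fin m) → ℝ := fun y => Real.sqrt (φ y) with hFdef
  set G : EuclideanSpace ℝ (Fin m) → ℝ := fun y => Real.sqrt (φ y) * |g y| with hGdef
  have hFmeas : AEStronglyMeasurable F volume :=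
    Real.continuous_sqrt.comp_aestronglyMeasurable hφmeas
  have hGmeas : AEStronglyMeasurable G volume :=
    hFmeas.mul (continuous_abs.comp_aestronglyMeasurable hgmeas)
  have hF2 : ∀ y, F y ^ 2 = φ y := fun y => Real.sq_sqrt (hφnn y)
  have hG2 : ∀ y, G y ^ 2 = φ y * g y ^ 2 := fun y => by
    rw [hGdef]; rw [mul_pow, Real.sq_sqrt (hφnn y), sq_abs]
  have hMemF : MemLp F (ENNReal.ofReal 2) volume := by
    rw [show ENNReal.ofReal 2 = 2 by norm_num]
    refine (memLp_two_iff_integrable_sq hFmeas).2 ?_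
    exact hφint.congr (Filter.Eventually.of_forall fun y => (hF2 y).symm)
  have hMemG : MemLp G (ENNReal.ofReal 2) volume := by
    rw [show ENNReal.ofReal 2 = 2 by norm_num]
    refine (memLp_two_iff_integrable_sq hGmeas).2 ?_
    exact hφg2.congr (Filter.Eventually.of_forall fun y => (hG2 y).symm)
  have hCS := MeasureTheory.integral_mul_le_Lp_mul_Lq_of_nonneg (μ := volume)
    (Real.holderConjugate_iff.mpr ⟨one_lt_two, by norm_num⟩)
    (Filter.Eventually.of_forall fun y => Real.sqrt_nonneg _)
    (Filter.Eventually.of_forall fun y => mul_nonneg (Real.sqrt_nonneg _) (abs_nonneg _))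
    hMemF hMemG
  have hrpow : ∀ a : ℝ, a ^ (2:ℝ) = a ^ (2:ℕ) := fun a => by
    rw [show (2:ℝ) = ((2:ℕ):ℝ) by norm_num, Real.rpow_natCast]
  have e1 : ∫ a, F a ^ (2:ℝ) = 1 := by
    rw [← kernel_integral_one hm hr x (r := r)]
    exact integral_congr_ae (Filter.Eventually.of_forall fun y => by simp only [hrpow]; rw [hF2 y])
  have e2 : ∫ a, G a ^ (2:ℝ) = A := by
    rw [hAdef]
    exact integral_congr_ae (Filter.Eventually.of_forall fun y => by simp only [hrpow]; rw [hG2 y])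
  rw [e1, e2, Real.one_rpow, one_mul] at hCS
  have hFG : ∀ y, F y * G y = |φ y| * |g y| := fun y => by
    rw [hFdef, hGdef, abs_of_nonneg (hφnn y), ← mul_assoc,
      Real.mul_self_sqrt (hφnn y)]
  have habs : |∫ y, φ y * g y| ≤ A ^ ((1:ℝ)/2) := by
    refine le_trans ?_ hCS
    calc |∫ y, φ y * g y| ≤ ∫ y, |φ y| * |g y| := by
          simpa [Real.norm_eq_abs, abs_mul] using
            norm_integral_le_integral_norm (fun y => φ y * g y)
      _ = ∫ y, F y * G y :=
          integral_congr_ae (Filter.Eventually.of_forall fun y => (hFG y).symm)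
  have hkey : (∫ y, φ y * g y) ^ 2 ≤ A := by
    have h1 : (∫ y, φ y * g y) ^ 2 = |∫ y, φ y * g y| ^ 2 := (sq_abs _).symm
    have h2 : |∫ y, φ y * g y| ^ 2 ≤ (A ^ ((1:ℝ)/2)) ^ 2 :=
      pow_le_pow_left₀ (abs_nonneg _) habs 2
    have h3 : (A ^ ((1:ℝ)/2)) ^ 2 = A := by
      rw [← Real.rpow_natCast (A ^ ((1:ℝ)/2)) 2, ← Real.rpow_mul hAnn]
      norm_num
    rw [h1, ← h3]; exact h2
  -- pass to the ball
  have hAball : A = ∫ y in Metric.ball x r, φ y * g y ^ 2 := by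
    rw [hAdef, ← integral_indicator measurableSet_ball]
    refine integral_congr_ae (Filter.Eventually.of_forall fun y => ?_)
    by_cases hy : y ∈ Metric.ball x r
    · rw [Set.indicator_of_mem hy]
    · rw [Set.indicator_of_notMem hy]
      rw [Metric.mem_ball, dist_comm] at hy
      show φ y * g y ^ 2 = 0
      rw [hφzero y (not_lt.mp hy), zero_mul]
  have hfinal : A ≤ C * ∫ y in Metric.ball x r, (f x - f y) ^ 2 := by
    rw [hAball]
    calc ∫ y in Metric.ball x r, φ y * g y ^ 2
        ≤ ∫ y in Metric.ball x r, C * g y ^ 2 := by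
          refine setIntegral_mono_on hφg2.integrableOn
            ((hg2.mono_set Metric.ball_subset_closedBall).const_mul C) measurableSet_ball
            fun y _ => mul_le_mul_of_nonneg_right (hφle y) (sq_nonneg _)
      _ = C * ∫ y in Metric.ball x r, g y ^ 2 := MeasureTheory.integral_const_mul _ _
      _ = C * ∫ y in Metric.ball x r, (f x - f y) ^ 2 := by
          congr 1
          refine setIntegral_congr_fun measurableSet_ball fun y _ => ?_
          simp only [hgdef]; ring
  calc (smoothOp m r f x - f x) ^ 2 = (∫ y, φ y * g y) ^ 2 := by rw [hid]
    _ ≤ A := hkey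
    _ ≤ C * ∫ y in Metric.ball x r, (f x - f y) ^ 2 := hfinal

lemma integrable_inner (hr : 0 < r) (f : EuclideanSpace ℝ (Fin m) → ℝ)
    (hfm : StronglyMeasurable f) (hf : MemLp f 2 volume) :
    Integrable (fun x => ∫ y in Metric.ball x r, (f x - f y) ^ 2) volume := by
  set Q : EuclideanSpace ℝ (Fin m) × EuclideanSpace ℝ (Fin m) → ℝ :=
    fun p => if dist p.1 p.2 < r then (f p.1 - f p.2) ^ 2 else 0 with hQdef
  have hS : MeasurableSet {p : EuclideanSpace ℝ (Fin m) × EuclideanSpace ℝ (Fin m) |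
      dist p.1 p.2 < r} :=
    (isOpen_lt (continuous_fst.dist continuous_snd) continuous_const).measurableSet
  have hf2 : Integrable (fun x => f x ^ 2) volume := hf.integrable_sq
  set V : ℝ := (volume (Metric.ball (0 : EuclideanSpace ℝ (Fin m)) r)).toReal with hVdef
  have hVol : ∀ x : EuclideanSpace ℝ (Fin m),
      (volume (Metric.ball x r)).toReal = V := fun x => by
    rw [hVdef, Measure.addHaar_ball_center]
  set H1 : EuclideanSpace ℝ (Fin m) × EuclideanSpace ℝ (Fin m) → ℝ :=
    fun p => if dist p.1 p.2 < r then 2 * f p.1 ^ 2 else 0 with hH1def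
  have hH1meas : Measurable H1 := by
    refine Measurable.ite hS ?_ measurable_const
    exact (measurable_const.mul (((hfm.measurable.comp measurable_fst)).pow_const 2))
  have hH1x : ∀ x, (fun y => H1 (x, y))
      = (Metric.ball x r).indicator (fun _ => 2 * f x ^ 2) := fun x => by
    funext y
    by_cases hy : y ∈ Metric.ball x r
    · rw [Set.indicator_of_mem hy]
      rw [Metric.mem_ball, dist_comm] at hy
      simp only [hH1def, if_pos hy]
    · rw [Set.indicator_of_notMem hy]
      rw [Metric.mem_ball, dist_comm] at hy
      simp only [hH1def, if_neg hy]
  have hH1 : Integrable H1 (volume.prod volume) := by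
    refine (integrable_prod_iff hH1meas.aestronglyMeasurable).2 ⟨?_, ?_⟩
    · refine Filter.Eventually.of_forall fun x => ?_
      rw [hH1x x]
      exact (integrableOn_const measure_ball_lt_top.ne).integrable_indicator
        measurableSet_ball
    · have key : ∀ x, ∫ y, ‖H1 (x, y)‖ = (2 * V) * f x ^ 2 := fun x => by
        have h1 : ∀ y, ‖H1 (x, y)‖ = H1 (x, y) := fun y => by
          rw [Real.norm_of_nonneg]
          simp only [hH1def]
          split_ifs
          · positivity
          · exact le_refl 0
        simp only [h1]
        rw [show (fun y => H1 (x, y)) = _ from hH1x x, integral_indicator_const _ measurableSet_ball,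
          measureReal_def, hVol x, smul_eq_mul]
        ring
      exact (hf2.const_mul (2 * V)).congr (Filter.Eventually.of_forall fun x => (key x).symm)
  have hH2 : Integrable (fun p : EuclideanSpace ℝ (Fin m) × EuclideanSpace ℝ (Fin m) =>
      if dist p.1 p.2 < r then 2 * f p.2 ^ 2 else 0) (volume.prod volume) := by
    refine (hH1.swap).congr (Filter.Eventually.of_forall fun p => ?_)
    simp only [Function.comp, hH1def, Prod.fst_swap, Prod.snd_swap, dist_comm]
  have hQmeas : Measurable Q := by
    refine Measurable.ite hS ?_ measurable_const
    exact ((hfm.measurable.comp measurable_fst).sub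
      (hfm.measurable.comp measurable_snd)).pow_const 2
  have hQ : Integrable Q (volume.prod volume) := by
    refine Integrable.mono' (hH1.add hH2) hQmeas.aestronglyMeasurable
      (Filter.Eventually.of_forall fun p => ?_)
    simp only [hQdef, hH1def, Pi.add_apply]
    split_ifs with h
    · rw [Real.norm_of_nonneg (sq_nonneg _)]
      nlinarith [sq_nonneg (f p.1 + f p.2)]
    · simp
  have := hQ.integral_prod_left
  refine this.congr (Filter.Eventually.of_forall fun x => ?_)
  show (∫ y, Q (x, y)) = ∫ y in Metric.ball x r, (f x - f y) ^ 2
  rw [← integral_indicator measurableSet_ball]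
  refine integral_congr_ae (Filter.Eventually.of_forall fun y => ?_)
  by_cases hy : y ∈ Metric.ball x r
  · rw [Set.indicator_of_mem hy]
    rw [Metric.mem_ball, dist_comm] at hy
    simp only [hQdef, if_pos hy]
  · rw [Set.indicator_of_notMem hy]
    rw [Metric.mem_ball, dist_comm] at hy
    simp only [hQdef, if_neg hy]


end Aux

theorem stmt_14 (m : ℕ) (hm : 1 ≤ m) (r : ℝ) (hr : 0 < r)
    (f : EuclideanSpace ℝ (Fin m) → ℝ) (hf : MemLp f 2 volume) :
    ∫ x, (smoothOp m r f x - f x) ^ 2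
      ≤ (((m : ℝ) + 2) / (2 * unitBallVol m * r ^ m)) *
          ∫ x, ∫ y in Metric.ball x r, (f x - f y) ^ 2 := by
  set g : EuclideanSpace ℝ (Fin m) → ℝ := hf.1.mk f with hgdef
  have hgm : StronglyMeasurable g := hf.1.stronglyMeasurable_mk
  have hfg : f =ᵐ[volume] g := hf.1.ae_eq_mk
  have hgL2 : MemLp g 2 volume := hf.ae_eq hfg
  have hsmooth : ∀ x, smoothOp m r f x = smoothOp m r g x := fun x =>
    integral_congr_ae (hfg.mono fun y hy => by simp only [hy])
  have hLHS : ∫ x, (smoothOp m r f x - f x) ^ 2 = ∫ x, (smoothOp m r g x - g x) ^ 2 :=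
    integral_congr_ae (hfg.mono fun x hx => by simp only [hsmooth x, hx])
  have hRHS : ∫ x, ∫ y in Metric.ball x r, (f x - f y) ^ 2
      = ∫ x, ∫ y in Metric.ball x r, (g x - g y) ^ 2 := by
    refine integral_congr_ae (hfg.mono fun x hx => ?_)
    simp only [hx]
    exact setIntegral_congr_ae measurableSet_ball (hfg.mono fun y hy _ => by simp only [hy])
  rw [hLHS, hRHS]
  set C := (r ^ m)⁻¹ * (((m : ℝ) + 2) / (2 * unitBallVol m)) with hCdef
  have hCeq : C = ((m : ℝ) + 2) / (2 * unitBallVol m * r ^ m) := by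
    simp only [hCdef, div_mul_eq_div_div]
    exact inv_mul_eq_div _ _
  have hInt : Integrable (fun x => ∫ y in Metric.ball x r, (g x - g y) ^ 2) volume :=
    integrable_inner hr g hgm hgL2
  calc ∫ x, (smoothOp m r g x - g x) ^ 2
      ≤ ∫ x, C * ∫ y in Metric.ball x r, (g x - g y) ^ 2 := by
        refine integral_mono_of_nonneg (Filter.Eventually.of_forall fun x => sq_nonneg _)
          (hInt.const_mul C) (Filter.Eventually.of_forall fun x => ?_)
        exact pointwise_bound hm hr g hgL2 x
    _ = C * ∫ x, ∫ y in Metric.ball x r, (g x - g y) ^ 2 :=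
        MeasureTheory.integral_const_mul _ _
    _ = (((m : ℝ) + 2) / (2 * unitBallVol m * r ^ m)) *
          ∫ x, ∫ y in Metric.ball x r, (g x - g y) ^ 2 := by rw [hCeq]
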